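/- π = ∑_{n=0}^∞ (1/16)^n · (4/(8n+1) − 2/(8n+4) − 1/(8n+5) − 1/(8n+6)) (the Bailey–Borwein–Plouffe formula). -/

import Mathlib

open Real MeasureTheory intervalIntegral

noncomputable def pp (x : ℝ) : ℝ :=
  4*Real.sqrt 2 - 8*x^3 - 4*Real.sqrt 2*x^4 - 8*x^5

noncomputable def G (x : ℝ) : ℝ :=
  2*Real.log (1-x^2) - 2*Real.log (x^2 - Real.sqrt 2*x + 1)
    + 4*Real.arctan (Real.sqrt 2*x - 1)

lemma hs : Real.sqrt 2 * Real.sqrt 2 = 2 := Real.mul_self_sqrt (by norm_num)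

lemma hr2 : (Real.sqrt 2 / 2)^2 = 1/2 := by
  rw [div_pow, sq, hs]; norm_num

lemma hr_pos : 0 < Real.sqrt 2 / 2 := by positivity

lemma hr_lt : Real.sqrt 2 / 2 < 1 := by
  nlinarith [hs, Real.sqrt_nonneg 2, hr_pos]

-- a single monomial integral
lemma mono_int (c : ℝ) (k : ℕ) (r : ℝ) :
    ∫ x in (0:ℝ)..r, c * x^k = c * r^(k+1)/(k+1) := by
  rw [intervalIntegral.integral_const_mul, integral_pow]
  rw [zero_pow (Nat.succ_ne_zero k)]
  ring

lemma term_int (n : ℕ) :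
    ∫ x in (0:ℝ)..(Real.sqrt 2 / 2), (x^8)^n * pp x
      = (1/16 : ℝ)^n * (4/(8*n+1) - 2/(8*n+4) - 1/(8*n+5) - 1/(8*n+6)) := by
  set s := Real.sqrt 2 with hsdef
  set r := Real.sqrt 2 / 2 with hrdef
  have hrs : r = s/2 := rfl
  have h : ∀ x : ℝ, (x^8)^n * pp x
      = 4*s*x^(8*n) + (-8)*x^(8*n+3) + (-(4*s))*x^(8*n+4) + (-8)*x^(8*n+5) := by
    intro x; simp only [pp]; ring
  rw [intervalIntegral.integral_congr (g := fun x => 4*s*x^(8*n) + (-8)*x^(8*n+3)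
    + (-(4*s))*x^(8*n+4) + (-8)*x^(8*n+5)) (fun x _ => h x)]
  have ic : ∀ (c : ℝ) (k : ℕ), IntervalIntegrable (fun x : ℝ => c * x^k) volume 0 r :=
    fun c k => ((continuous_const.mul (continuous_pow k)).intervalIntegrable 0 r)
  rw [intervalIntegral.integral_add (((ic _ _).add (ic _ _)).add (ic _ _)) (ic _ _),
      intervalIntegral.integral_add ((ic _ _).add (ic _ _)) (ic _ _),
      intervalIntegral.integral_add (ic _ _) (ic _ _),
      mono_int, mono_int, mono_int, mono_int]
  have hrp : ∀ k : ℕ, r^(8*n+k) = (1/16:ℝ)^n * r^k := by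
    intro k
    rw [pow_add, pow_mul]
    congr 1
    rw [show r^8 = ((r^2)^2)^2 by ring, hr2]
    norm_num
  have e1 : r^(8*n+0+1) = (1/16:ℝ)^n * r := by rw [show 8*n+0+1 = 8*n+1 by ring, hrp 1, pow_one]
  have e2 : r^(8*n+3+1) = (1/16:ℝ)^n * (1/4) := by
    rw [show 8*n+3+1 = 8*n+4 by ring, hrp 4, show r^4 = ((r^2)^2) by ring, hr2]; norm_num
  have e3 : r^(8*n+4+1) = (1/16:ℝ)^n * (s/8) := by
    rw [show 8*n+4+1 = 8*n+5 by ring, hrp 5, show r^5 = ((r^2)^2)*r by ring, hr2, hrs]; ring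
  have e4 : r^(8*n+5+1) = (1/16:ℝ)^n * (1/8) := by
    rw [show 8*n+5+1 = 8*n+6 by ring, hrp 6, show r^6 = ((r^2)^2)*(r^2) by ring, hr2]; norm_num
  rw [e1, e2, e3, e4, hrs]
  have c1 : (0:ℝ) < 8*n+1 := by positivity
  have c4 : (0:ℝ) < 8*n+4 := by positivity
  have c5 : (0:ℝ) < 8*n+5 := by positivity
  have c6 : (0:ℝ) < 8*n+6 := by positivity
  push_cast
  have h2 : s^2 = 2 := by rw [sq, hs]
  linear_combination (2*(1/16:ℝ)^n/(8*(n:ℝ)+1) - (1/16:ℝ)^n/2/(8*(n:ℝ)+5)) * h2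

lemma deriv_G {x : ℝ} (hx : x ∈ Set.uIcc (0:ℝ) (Real.sqrt 2 / 2)) :
    HasDerivAt G ((1-x^8)⁻¹ * pp x) x := by
  rw [Set.uIcc_of_le hr_pos.le] at hx
  obtain ⟨hx0, hx1⟩ := hx
  set s := Real.sqrt 2 with hsdef
  have h2 : s^2 = 2 := by rw [sq, hs]
  have hxlt : x < 1 := lt_of_le_of_lt hx1 hr_lt
  have h1 : (0:ℝ) < 1 - x^2 := by nlinarith
  have hq : (0:ℝ) < x^2 - s*x + 1 := by nlinarith [sq_nonneg (x - s/2)]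
  have h8 : (0:ℝ) < 1 - x^8 := by
    have : x^8 < 1 := pow_lt_one₀ hx0 hxlt (by norm_num)
    linarith
  have d1 : HasDerivAt (fun y : ℝ => 1 - y^2) (-(2*x)) x := by
    simpa using (hasDerivAt_pow 2 x).const_sub 1
  have d1l : HasDerivAt (fun y : ℝ => Real.log (1 - y^2)) (-(2*x)/(1-x^2)) x :=
    d1.log h1.ne'
  have d2 : HasDerivAt (fun y : ℝ => y^2 - s*y + 1) (2*x - s) x := by
    have := ((hasDerivAt_pow 2 x).sub (((hasDerivAt_id x).const_mul s))).add_const 1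
    simpa using this
  have d2l : HasDerivAt (fun y : ℝ => Real.log (y^2 - s*y + 1)) ((2*x-s)/(x^2-s*x+1)) x :=
    d2.log hq.ne'
  have d3i : HasDerivAt (fun y : ℝ => s*y - 1) s x := by
    simpa using ((hasDerivAt_id x).const_mul s).sub_const 1
  have d3 : HasDerivAt (fun y : ℝ => Real.arctan (s*y - 1)) (1/(1+(s*x-1)^2) * s) x :=
    by have := (Real.hasDerivAt_arctan (s*x-1)).comp x d3i; exact this
  have dG : HasDerivAt G
      (2 * (-(2*x)/(1-x^2)) - 2*((2*x-s)/(x^2-s*x+1)) + 4*(1/(1+(s*x-1)^2)*s)) x :=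
    ((d1l.const_mul 2).sub (d2l.const_mul 2)).add (d3.const_mul 4)
  convert dG using 1
  have key : 1+(s*x-1)^2 = 2*(x^2 - s*x + 1) := by linear_combination x^2*h2
  rw [key, pp]
  have hq' : x * (x - s) + 1 ≠ 0 := by nlinarith
  field_simp
  rw [← hsdef]
  linear_combination (-8*x^7 + 8*x^5 + 8*x^3 - 8*x) * h2

lemma integrand_cont : ContinuousOn (fun x : ℝ => (1-x^8)⁻¹ * pp x)
    (Set.uIcc (0:ℝ) (Real.sqrt 2 / 2)) := by
  rw [Set.uIcc_of_le hr_pos.le]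
  apply ContinuousOn.mul
  · apply ContinuousOn.inv₀ (by fun_prop)
    intro x hx
    have hxlt : x < 1 := lt_of_le_of_lt hx.2 hr_lt
    have : x^8 < 1 := pow_lt_one₀ hx.1 hxlt (by norm_num)
    intro h; nlinarith [this]
  · unfold pp; fun_prop

lemma integral_pi :
    ∫ x in (0:ℝ)..(Real.sqrt 2 / 2), (1-x^8)⁻¹ * pp x = Real.pi := by
  rw [intervalIntegral.integral_eq_sub_of_hasDerivAt (fun x hx => deriv_G hx)
    (integrand_cont.intervalIntegrable)]
  have h2 : Real.sqrt 2 * Real.sqrt 2 = 2 := hs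
  have e1 : (Real.sqrt 2/2)^2 = 1/2 := hr2
  simp only [G]
  have v1 : 1 - (Real.sqrt 2/2)^2 = 1/2 := by rw [e1]; norm_num
  have v2 : (Real.sqrt 2/2)^2 - Real.sqrt 2*(Real.sqrt 2/2) + 1 = 1/2 := by
    rw [e1]; nlinarith [hs]
  have v3 : Real.sqrt 2*(Real.sqrt 2/2) - 1 = 0 := by nlinarith [hs]
  rw [v1, v2, v3]
  norm_num [Real.arctan_neg, Real.arctan_one]
  ring

lemma pp_bound {t : ℝ} (h0 : 0 ≤ t) (h1 : t ≤ 1) : |pp t| ≤ 30 := by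
  have hslt : Real.sqrt 2 < 3/2 := by nlinarith [hs, Real.sqrt_nonneg 2]
  have hsnn := Real.sqrt_nonneg 2
  rw [abs_le, pp]
  constructor <;> nlinarith [pow_le_one₀ h0 h1 (n := 3), pow_le_one₀ h0 h1 (n := 4),
    pow_le_one₀ h0 h1 (n := 5), pow_nonneg h0 3, pow_nonneg h0 4, pow_nonneg h0 5]

theorem bbp_formula :
    Real.pi = ∑' n : ℕ, (1/16 : ℝ)^n *
      (4/(8*n+1) - 2/(8*n+4) - 1/(8*n+5) - 1/(8*n+6)) := by
  have hr8 : (Real.sqrt 2 / 2)^8 = 1/16 := by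
    rw [show (Real.sqrt 2/2)^8 = (((Real.sqrt 2/2)^2)^2)^2 by ring, hr2]; norm_num
  have H : HasSum (fun n : ℕ => ∫ x in (0:ℝ)..(Real.sqrt 2/2), (x^8)^n * pp x)
      (∫ x in (0:ℝ)..(Real.sqrt 2/2), (1-x^8)⁻¹ * pp x) := by
    apply intervalIntegral.hasSum_integral_of_dominated_convergence
      (bound := fun (n : ℕ) (_ : ℝ) => (1/16 : ℝ)^n * 30)
    · intro n
      exact (Continuous.aestronglyMeasurable (by unfold pp; fun_prop))
    · intro n
      filter_upwards with t ht
      rw [Set.uIoc_of_le hr_pos.le] at ht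
      have ht1 : t ≤ 1 := le_trans ht.2 hr_lt.le
      have ht8 : t^8 ≤ 1/16 := by
        calc t^8 ≤ (Real.sqrt 2/2)^8 := pow_le_pow_left₀ ht.1.le ht.2 8
        _ = 1/16 := hr8
      have ht8n : (0:ℝ) ≤ t^8 := by positivity
      rw [norm_mul, norm_pow]
      have : ‖t^8‖ ≤ 1/16 := by rwa [Real.norm_eq_abs, abs_of_nonneg ht8n]
      exact mul_le_mul (pow_le_pow_left₀ (norm_nonneg _) this n)
        (by rw [Real.norm_eq_abs]; exact pp_bound ht.1.le ht1) (norm_nonneg _)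
        (by positivity)
    · filter_upwards with t _
      exact (summable_geometric_of_lt_one (by norm_num) (by norm_num)).mul_right 30
    · exact intervalIntegrable_const
    · filter_upwards with t ht
      rw [Set.uIoc_of_le hr_pos.le] at ht
      have ht1 : t < 1 := lt_of_le_of_lt ht.2 hr_lt
      have h8 : t^8 < 1 := pow_lt_one₀ ht.1.le ht1 (by norm_num)
      exact (hasSum_geometric_of_lt_one (by positivity) h8).mul_right (pp t)
  rw [integral_pi] at H
  rw [← H.tsum_eq]
  exact tsum_congr fun n => term_int n
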